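/- Let p, q ≥ 0 with p + q > 0, let λ > 0, and let g : ℝ → ℝ be continuous with finite limits at +∞ and −∞. Set C₋ = (1/(2λ)) ∫_{−∞}^0 e^{λy} g(y) dy, C₊ = (1/(2λ)) ∫_0^∞ e^{−λy} g(y) dy, D₋ = (2p/(p+q))·C₊ + ((q−p)/(p+q))·C₋, D₊ = ((p−q)/(p+q))·C₊ + (2q/(p+q))·C₋, and define f(x) = C₊ e^{λx} + D₊ e^{−λx} − (1/λ) ∫_0^x sinh(λ(x−y)) g(y) dy for x ≥ 0, and f(x) = C₋ e^{−λx} + D₋ e^{λx} + (1/λ) ∫_x^0 sinh(λ(x−y)) g(y) dy for x ≤ 0. Then: f is continuous on ℝ and has finite limits at +∞ and −∞; f is twice continuously differentiable on (−∞,0] and on [0,∞) separately (with one-sided derivatives at 0); λ² f(x) − f''(x) = g(x) for all x ≠ 0; p·f'(0+) = q·f'(0−); and f''(0+) = f''(0−). -/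

import Mathlib

set_option maxHeartbeats 1000000
open MeasureTheory Real Filter Set

lemma aux_bound {g : ℝ → ℝ} (hg : Continuous g) {gp gm : ℝ}
    (hgt : Tendsto g atTop (nhds gp)) (hgb : Tendsto g atBot (nhds gm)) :
    ∃ M : ℝ, 0 < M ∧ ∀ y, |g y| ≤ M := by
  have h1 : ∀ᶠ y in atTop, |g y| ≤ |gp| + 1 := by
    have := hgt.abs.eventually (eventually_le_nhds (lt_add_one |gp|))
    simpa using this
  have h2 : ∀ᶠ y in atBot, |g y| ≤ |gm| + 1 := by
    have := hgb.abs.eventually (eventually_le_nhds (lt_add_one |gm|))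
    simpa using this
  obtain ⟨a, ha⟩ := h1.exists_forall_of_atTop
  obtain ⟨b, hb⟩ := h2.exists_forall_of_atBot
  obtain ⟨C, hC⟩ := (isCompact_Icc (a := min a b) (b := max a b)).exists_bound_of_continuousOn
    (hg.continuousOn (s := Icc (min a b) (max a b)))
  refine ⟨max (max (|gp|+1) (|gm|+1)) C + 1, by positivity, fun y => ?_⟩
  rcases le_or_gt a y with h | h
  · calc |g y| ≤ |gp| + 1 := ha y h
      _ ≤ _ := by nlinarith [le_max_left (max (|gp|+1) (|gm|+1)) C, le_max_left (|gp|+1) (|gm|+1)]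
  rcases le_or_gt y b with h' | h'
  · calc |g y| ≤ |gm| + 1 := hb y h'
      _ ≤ _ := by nlinarith [le_max_left (max (|gp|+1) (|gm|+1)) C, le_max_right (|gp|+1) (|gm|+1)]
  · have : y ∈ Icc (min a b) (max a b) :=
      ⟨le_trans (min_le_right a b) h'.le, le_trans h.le (le_max_left a b)⟩
    calc |g y| ≤ C := hC y this
      _ ≤ _ := by nlinarith [le_max_right (max (|gp|+1) (|gm|+1)) C]


lemma aux_expint {l : ℝ} (hl : 0 < l) (a : ℝ) :
    IntegrableOn (fun y : ℝ => Real.exp (-(l*y))) (Ioi a) := by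
  simpa [neg_mul] using exp_neg_integrableOn_Ioi a hl

lemma aux_expval {l : ℝ} (hl : 0 < l) (a : ℝ) :
    ∫ y in Ioi a, Real.exp (-(l*y)) = Real.exp (-(l*a)) / l := by
  have hderiv : ∀ x ∈ Ici a, HasDerivAt (fun y : ℝ => -Real.exp (-(l*y)) / l)
      (Real.exp (-(l*x))) x := by
    intro x _
    have h := (((hasDerivAt_id x).const_mul l).neg.exp.neg.div_const l)
    refine h.congr_deriv ?_
    symm
    simp only [Pi.neg_apply, id_eq]
    field_simp
  have htend : Tendsto (fun y : ℝ => -Real.exp (-(l*y)) / l) atTop (nhds 0) := by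
    have : Tendsto (fun y : ℝ => -(l*y)) atTop atBot := by
      simpa [Function.comp_def] using tendsto_neg_atTop_atBot.comp (tendsto_id.const_mul_atTop hl)
    have := (Real.tendsto_exp_atBot.comp this).neg.div_const l
    simpa using this
  have := integral_Ioi_of_hasDerivAt_of_tendsto' hderiv (aux_expint hl a) htend
  rw [this]; ring

lemma aux_int {l : ℝ} (hl : 0 < l) {g : ℝ → ℝ} (hg : Continuous g) {M : ℝ}
    (hM : ∀ y, |g y| ≤ M) (a : ℝ) :
    IntegrableOn (fun y => Real.exp (-(l*y)) * g y) (Ioi a) := by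
  refine Integrable.mono' ((aux_expint hl a).const_mul M) ?_ ?_
  · exact (Continuous.mul (by continuity) hg).aestronglyMeasurable
  · refine ae_of_all _ fun y => ?_
    have h0 : (0:ℝ) < Real.exp (-(l*y)) := Real.exp_pos _
    have := hM y
    rw [norm_mul, Real.norm_eq_abs, Real.norm_eq_abs, abs_of_pos h0]
    calc Real.exp (-(l*y)) * |g y| ≤ Real.exp (-(l*y)) * M := by nlinarith
      _ = M * Real.exp (-(l*y)) := by ring


lemma aux_expival {l : ℝ} (hl : 0 < l) (a b : ℝ) :
    ∫ y in a..b, Real.exp (l*y) = (Real.exp (l*b) - Real.exp (l*a)) / l := by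
  have hderiv : ∀ x ∈ Set.uIcc a b, HasDerivAt (fun y : ℝ => Real.exp (l*y) / l)
      (Real.exp (l*x)) x := by
    intro x _
    have h := ((hasDerivAt_id x).const_mul l).exp.div_const l
    refine h.congr_deriv ?_
    symm
    simp only [Pi.neg_apply, id_eq]
    field_simp
  have := intervalIntegral.integral_eq_sub_of_hasDerivAt hderiv
    (Continuous.intervalIntegrable (by fun_prop) a b)
  rw [this]; ring

lemma aux_L1 {l : ℝ} (hl : 0 < l) {g : ℝ → ℝ} (hg : Continuous g) {M : ℝ} (hM : ∀ y, |g y| ≤ M)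
    {gp : ℝ} (hgt : Tendsto g atTop (nhds gp)) :
    Tendsto (fun x => Real.exp (l*x) * ∫ y in Ioi x, Real.exp (-(l*y)) * g y)
      atTop (nhds (gp / l)) := by
  rw [Metric.tendsto_atTop]
  intro ε hε
  have hε' : 0 < ε * l / 2 := by positivity
  obtain ⟨N, hN⟩ := (Metric.tendsto_nhds.mp hgt _ hε').exists_forall_of_atTop
  refine ⟨N, fun x hx => ?_⟩
  have hint1 := aux_int hl hg hM x
  have hint2 : IntegrableOn (fun y => Real.exp (-(l*y)) * (g y - gp)) (Ioi x) := by
    have : (fun y => Real.exp (-(l*y)) * (g y - gp))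
        = fun y => Real.exp (-(l*y)) * g y - gp * Real.exp (-(l*y)) := by
      funext y; ring
    rw [this]
    exact hint1.sub ((aux_expint hl x).const_mul gp)
  have hsplit : ∫ y in Ioi x, Real.exp (-(l*y)) * g y
      = (∫ y in Ioi x, Real.exp (-(l*y)) * (g y - gp)) + gp * (Real.exp (-(l*x)) / l) := by
    rw [← aux_expval hl x, ← integral_const_mul]
    rw [← integral_add hint2 ((aux_expint hl x).const_mul gp)]
    congr 1; funext y; ring
  have hbound : |∫ y in Ioi x, Real.exp (-(l*y)) * (g y - gp)|
      ≤ (ε * l / 2) * (Real.exp (-(l*x)) / l) := by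
    rw [← aux_expval hl x, ← integral_const_mul, ← Real.norm_eq_abs]
    refine norm_integral_le_of_norm_le ((aux_expint hl x).const_mul _) ?_
    rw [ae_restrict_iff' measurableSet_Ioi]
    refine ae_of_all _ fun y hy => ?_
    have hy' : N ≤ y := le_trans hx (le_of_lt hy)
    have := hN y hy'
    rw [Real.dist_eq] at this
    rw [norm_mul, Real.norm_eq_abs, Real.norm_eq_abs, abs_of_pos (Real.exp_pos _)]
    have h0 : (0:ℝ) < Real.exp (-(l*y)) := Real.exp_pos _
    nlinarith [abs_nonneg (g y - gp)]
  rw [Real.dist_eq, hsplit]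
  have hxexp : Real.exp (l*x) * (Real.exp (-(l*x)) / l) = 1 / l := by
    rw [mul_div_assoc', ← Real.exp_add]; simp
  calc |Real.exp (l*x) * ((∫ y in Ioi x, Real.exp (-(l*y)) * (g y - gp))
          + gp * (Real.exp (-(l*x)) / l)) - gp / l|
      = |Real.exp (l*x) * (∫ y in Ioi x, Real.exp (-(l*y)) * (g y - gp))| := by
        rw [mul_add]
        congr 1
        rw [mul_comm gp, ← mul_assoc, hxexp]
        ring
    _ = Real.exp (l*x) * |∫ y in Ioi x, Real.exp (-(l*y)) * (g y - gp)| := by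
        rw [abs_mul, abs_of_pos (Real.exp_pos _)]
    _ ≤ Real.exp (l*x) * ((ε * l / 2) * (Real.exp (-(l*x)) / l)) := by
        have := Real.exp_pos (l*x); nlinarith [hbound]
    _ = ε / 2 := by
        rw [mul_comm (Real.exp (l*x)), mul_assoc]
        rw [show Real.exp (-(l*x)) / l * Real.exp (l*x) = 1/l by
          rw [div_mul_eq_mul_div, ← Real.exp_add]; simp]
        field_simp
    _ < ε := by linarith

lemma aux_L2 {l : ℝ} (hl : 0 < l) {g : ℝ → ℝ} (hg : Continuous g) {M : ℝ} (hM : ∀ y, |g y| ≤ M)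
    {gp : ℝ} (hgt : Tendsto g atTop (nhds gp)) :
    Tendsto (fun x => Real.exp (-(l*x)) * ∫ y in (0:ℝ)..x, Real.exp (l*y) * g y)
      atTop (nhds (gp / l)) := by
  rw [Metric.tendsto_nhds]
  intro ε hε
  have hε' : 0 < ε * l / 4 := by positivity
  obtain ⟨x₁, hx₁⟩ := (Metric.tendsto_nhds.mp hgt _ hε').exists_forall_of_atTop
  set x₀ := max x₁ 0 with hx₀def
  have hx₀0 : (0:ℝ) ≤ x₀ := le_max_right _ _
  set J₀ := ∫ y in (0:ℝ)..x₀, Real.exp (l*y) * g y with hJ₀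
  set K := |J₀| + |gp| * Real.exp (l*x₀) / l with hK
  have hK0 : 0 ≤ K := by positivity
  have htend0 : Tendsto (fun x : ℝ => Real.exp (-(l*x)) * K) atTop (nhds 0) := by
    have h1 : Tendsto (fun y : ℝ => -(l*y)) atTop atBot := by
      simpa [Function.comp_def] using tendsto_neg_atTop_atBot.comp (tendsto_id.const_mul_atTop hl)
    have := (Real.tendsto_exp_atBot.comp h1).mul_const K
    simpa using this
  filter_upwards [eventually_ge_atTop x₀, htend0.eventually (gt_mem_nhds (show (0:ℝ) < ε/4 by positivity))]
    with x hx hxK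
  have hcont1 : Continuous fun y => Real.exp (l*y) * g y := by fun_prop
  have hsplit : (∫ y in (0:ℝ)..x, Real.exp (l*y) * g y)
      = J₀ + ∫ y in x₀..x, Real.exp (l*y) * g y := by
    rw [hJ₀]
    exact (intervalIntegral.integral_add_adjacent_intervals
      (hcont1.intervalIntegrable _ _) (hcont1.intervalIntegrable _ _)).symm
  have hE : (∫ y in x₀..x, Real.exp (l*y) * g y)
      = gp * ((Real.exp (l*x) - Real.exp (l*x₀)) / l)
        + ∫ y in x₀..x, Real.exp (l*y) * (g y - gp) := by
    rw [← aux_expival hl, ← intervalIntegral.integral_const_mul,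
      ← intervalIntegral.integral_add ((by fun_prop : Continuous fun y => gp * Real.exp (l*y)).intervalIntegrable _ _)
        ((by fun_prop : Continuous fun y => Real.exp (l*y) * (g y - gp)).intervalIntegrable _ _)]
    congr 1; funext y; ring
  have hEbound : |∫ y in x₀..x, Real.exp (l*y) * (g y - gp)|
      ≤ (ε * l / 4) * ((Real.exp (l*x) - Real.exp (l*x₀)) / l) := by
    rw [← aux_expival hl, ← intervalIntegral.integral_const_mul]
    calc |∫ y in x₀..x, Real.exp (l*y) * (g y - gp)|
        ≤ ∫ y in x₀..x, |Real.exp (l*y) * (g y - gp)| :=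
          intervalIntegral.abs_integral_le_integral_abs hx
      _ ≤ ∫ y in x₀..x, (ε * l / 4) * Real.exp (l*y) := by
          refine intervalIntegral.integral_mono_on hx
            ((by fun_prop : Continuous fun y => |Real.exp (l*y) * (g y - gp)|).intervalIntegrable _ _)
            ((by fun_prop : Continuous fun y => (ε * l / 4) * Real.exp (l*y)).intervalIntegrable _ _)
            fun y hy => ?_
          have hyx₁ : x₁ ≤ y := le_trans (le_max_left _ _) hy.1
          have := hx₁ y hyx₁
          rw [Real.dist_eq] at this
          rw [abs_mul, abs_of_pos (Real.exp_pos _)]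
          nlinarith [Real.exp_pos (l*y), abs_nonneg (g y - gp)]
  -- now assemble
  have hPQ : Real.exp (-(l*x)) * Real.exp (l*x) = 1 := by
    rw [← Real.exp_add]; simp
  have hmono : Real.exp (l*x₀) ≤ Real.exp (l*x) :=
    Real.exp_le_exp.2 (by nlinarith)
  rw [Real.dist_eq, hsplit, hE]
  have hEP : 0 < Real.exp (-(l*x)) := Real.exp_pos _
  set E := ∫ y in x₀..x, Real.exp (l*y) * (g y - gp) with hEdef
  have key : Real.exp (-(l*x)) * (J₀ + (gp * ((Real.exp (l*x) - Real.exp (l*x₀)) / l) + E)) - gp / l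
      = Real.exp (-(l*x)) * (J₀ - gp * Real.exp (l*x₀) / l + E) := by
    linear_combination (gp / l) * hPQ
  rw [key]
  calc |Real.exp (-(l*x)) * (J₀ - gp * Real.exp (l*x₀) / l + E)|
      = Real.exp (-(l*x)) * |J₀ - gp * Real.exp (l*x₀) / l + E| := by
        rw [abs_mul, abs_of_pos hEP]
    _ ≤ Real.exp (-(l*x)) * (K + |E|) := by
        have : |J₀ - gp * Real.exp (l*x₀) / l + E| ≤ K + |E| := by
          calc |J₀ - gp * Real.exp (l*x₀) / l + E| ≤ |J₀ - gp * Real.exp (l*x₀) / l| + |E| := abs_add_le _ _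
            _ ≤ K + |E| := by
                have : |J₀ - gp * Real.exp (l*x₀) / l| ≤ |J₀| + |gp * Real.exp (l*x₀) / l| := abs_sub _ _
                have h2 : |gp * Real.exp (l*x₀) / l| = |gp| * Real.exp (l*x₀) / l := by
                  rw [abs_div, abs_mul, abs_of_pos (Real.exp_pos _), abs_of_pos hl]
                rw [hK]; linarith [this, h2.le, h2.ge]
        nlinarith
    _ ≤ Real.exp (-(l*x)) * K + Real.exp (-(l*x)) * ((ε * l / 4) * ((Real.exp (l*x) - Real.exp (l*x₀)) / l)) := by
        nlinarith [hEbound]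
    _ ≤ Real.exp (-(l*x)) * K + ε / 4 := by
        have h3 : Real.exp (-(l*x)) * ((ε * l / 4) * ((Real.exp (l*x) - Real.exp (l*x₀)) / l)) ≤ ε / 4 := by
          have h4 : 0 < Real.exp (-(l*x)) * Real.exp (l*x₀) := by positivity
          have expand : Real.exp (-(l*x)) * ((ε * l / 4) * ((Real.exp (l*x) - Real.exp (l*x₀)) / l))
              = (ε/4) * (Real.exp (-(l*x)) * Real.exp (l*x) - Real.exp (-(l*x)) * Real.exp (l*x₀)) := by
            field_simp
          rw [expand, hPQ]; nlinarith
        linarith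
    _ < ε := by linarith [hxK]


lemma aux_plus {l : ℝ} (hl : 0 < l) {g : ℝ → ℝ} (hg : Continuous g) {M : ℝ} (hM : ∀ y, |g y| ≤ M)
    {gp : ℝ} (hgt : Tendsto g atTop (nhds gp)) (Cp Dp : ℝ)
    (hCp : Cp = (1 / (2 * l)) * ∫ y in Set.Ici (0:ℝ), Real.exp (-(l * y)) * g y) :
    Tendsto (fun x => Cp * Real.exp (l * x) + Dp * Real.exp (-(l * x))
      - (1 / l) * ∫ y in (0:ℝ)..x, Real.sinh (l * (x - y)) * g y) atTop (nhds (gp / l^2)) := by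
  have hexpneg : Tendsto (fun x : ℝ => Dp * Real.exp (-(l*x))) atTop (nhds 0) := by
    have h1 : Tendsto (fun y : ℝ => -(l*y)) atTop atBot := by
      simpa [Function.comp_def] using tendsto_neg_atTop_atBot.comp (tendsto_id.const_mul_atTop hl)
    have := (Real.tendsto_exp_atBot.comp h1).const_mul Dp
    simpa using this
  have hmain : Tendsto (fun x => Dp * Real.exp (-(l*x))
      + (1/(2*l)) * (Real.exp (l*x) * ∫ y in Ioi x, Real.exp (-(l*y)) * g y)
      + (1/(2*l)) * (Real.exp (-(l*x)) * ∫ y in (0:ℝ)..x, Real.exp (l*y) * g y))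
      atTop (nhds (0 + (1/(2*l)) * (gp/l) + (1/(2*l)) * (gp/l))) := by
    exact (hexpneg.add (((aux_L1 hl hg hM hgt)).const_mul _)).add
      (((aux_L2 hl hg hM hgt)).const_mul _)
  have hval : (0 : ℝ) + (1/(2*l)) * (gp/l) + (1/(2*l)) * (gp/l) = gp / l^2 := by
    field_simp; ring
  rw [hval] at hmain
  refine hmain.congr' ?_
  filter_upwards [eventually_ge_atTop (0:ℝ)] with x hx
  -- pointwise identity for x ≥ 0
  have hcont1 : Continuous fun y => Real.exp (-(l*y)) * g y := by fun_prop
  have hcont2 : Continuous fun y => Real.exp (l*y) * g y := by fun_prop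
  have hsinh : (∫ y in (0:ℝ)..x, Real.sinh (l * (x - y)) * g y)
      = (Real.exp (l*x)/2) * (∫ y in (0:ℝ)..x, Real.exp (-(l*y)) * g y)
        - (Real.exp (-(l*x))/2) * (∫ y in (0:ℝ)..x, Real.exp (l*y) * g y) := by
    rw [← intervalIntegral.integral_const_mul, ← intervalIntegral.integral_const_mul,
      ← intervalIntegral.integral_sub ((by fun_prop : Continuous fun y => Real.exp (l*x)/2 * (Real.exp (-(l*y)) * g y)).intervalIntegrable _ _)
        ((by fun_prop : Continuous fun y => Real.exp (-(l*x))/2 * (Real.exp (l*y) * g y)).intervalIntegrable _ _)]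
    refine intervalIntegral.integral_congr fun y _ => ?_
    have hexp1 : Real.exp (l*(x-y)) = Real.exp (l*x) * Real.exp (-(l*y)) := by
      rw [← Real.exp_add]; congr 1; ring
    have hexp2 : Real.exp (-(l*(x-y))) = Real.exp (-(l*x)) * Real.exp (l*y) := by
      rw [← Real.exp_add]; congr 1; ring
    rw [Real.sinh_eq, hexp1, hexp2]; ring
  have hsplitI : (∫ y in Ici (0:ℝ), Real.exp (-(l*y)) * g y)
      = (∫ y in (0:ℝ)..x, Real.exp (-(l*y)) * g y) + ∫ y in Ioi x, Real.exp (-(l*y)) * g y := by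
    rw [integral_Ici_eq_integral_Ioi, intervalIntegral.integral_of_le hx,
      ← Ioc_union_Ioi_eq_Ioi hx]
    exact setIntegral_union Ioc_disjoint_Ioi_same measurableSet_Ioi
      ((aux_int hl hg hM 0).mono_set Ioc_subset_Ioi_self) (aux_int hl hg hM x)
  have hCp' : Cp = (1/(2*l)) * ((∫ y in (0:ℝ)..x, Real.exp (-(l*y)) * g y)
      + ∫ y in Ioi x, Real.exp (-(l*y)) * g y) := by rw [hCp, hsplitI]
  rw [hsinh, hCp']
  have hl' : l ≠ 0 := ne_of_gt hl
  field_simp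
  ring


noncomputable def WA (l : ℝ) (g : ℝ → ℝ) (x : ℝ) : ℝ := ∫ y in (0:ℝ)..x, Real.cosh (l*y) * g y
noncomputable def WB (l : ℝ) (g : ℝ → ℝ) (x : ℝ) : ℝ := ∫ y in (0:ℝ)..x, Real.sinh (l*y) * g y
noncomputable def W (l : ℝ) (g : ℝ → ℝ) (c₁ c₂ : ℝ) (x : ℝ) : ℝ :=
  c₁ * Real.exp (l*x) + c₂ * Real.exp (-(l*x))
    - (1/l) * (Real.sinh (l*x) * WA l g x - Real.cosh (l*x) * WB l g x)
noncomputable def W' (l : ℝ) (g : ℝ → ℝ) (c₁ c₂ : ℝ) (x : ℝ) : ℝ :=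
  l*c₁ * Real.exp (l*x) - l*c₂ * Real.exp (-(l*x))
    - (Real.cosh (l*x) * WA l g x - Real.sinh (l*x) * WB l g x)

variable {l : ℝ} {g : ℝ → ℝ}

lemma W_eq (hg : Continuous g) (c₁ c₂ x : ℝ) :
    W l g c₁ c₂ x = c₁ * Real.exp (l*x) + c₂ * Real.exp (-(l*x))
      - (1/l) * ∫ y in (0:ℝ)..x, Real.sinh (l*(x-y)) * g y := by
  unfold W WA WB
  congr 1
  rw [← intervalIntegral.integral_const_mul, ← intervalIntegral.integral_const_mul,
    ← intervalIntegral.integral_sub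
      ((by fun_prop : Continuous fun y => Real.sinh (l*x) * (Real.cosh (l*y) * g y)).intervalIntegrable _ _)
      ((by fun_prop : Continuous fun y => Real.cosh (l*x) * (Real.sinh (l*y) * g y)).intervalIntegrable _ _)]
  congr 1
  refine intervalIntegral.integral_congr fun y _ => ?_
  have : l*(x-y) = l*x - l*y := by ring
  rw [this, Real.sinh_sub]; ring

lemma hasDerivAt_WA (hg : Continuous g) (x : ℝ) :
    HasDerivAt (WA l g) (Real.cosh (l*x) * g x) x := by
  have hc : Continuous fun y => Real.cosh (l*y) * g y := by fun_prop
  exact intervalIntegral.integral_hasDerivAt_right (hc.intervalIntegrable _ _)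
    (hc.stronglyMeasurableAtFilter _ _) hc.continuousAt

lemma hasDerivAt_WB (hg : Continuous g) (x : ℝ) :
    HasDerivAt (WB l g) (Real.sinh (l*x) * g x) x := by
  have hc : Continuous fun y => Real.sinh (l*y) * g y := by fun_prop
  exact intervalIntegral.integral_hasDerivAt_right (hc.intervalIntegrable _ _)
    (hc.stronglyMeasurableAtFilter _ _) hc.continuousAt

lemma hasDerivAt_W (hl : 0 < l) (hg : Continuous g) (c₁ c₂ x : ℝ) :
    HasDerivAt (W l g c₁ c₂) (W' l g c₁ c₂ x) x := by
  have hlin : HasDerivAt (fun x : ℝ => l*x) l x := by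
    simpa using (hasDerivAt_id x).const_mul l
  have h := (((hlin.exp.const_mul c₁).add (hlin.neg.exp.const_mul c₂)).sub
    (((hlin.sinh.mul (hasDerivAt_WA (l := l) hg x)).sub
      (hlin.cosh.mul (hasDerivAt_WB (l := l) hg x))).const_mul (1/l)))
  refine h.congr_deriv ?_
  symm
  unfold W' 
  have hl' : l ≠ 0 := ne_of_gt hl
  simp only [Pi.neg_apply]
  field_simp
  ring

lemma hasDerivAt_W' (hl : 0 < l) (hg : Continuous g) (c₁ c₂ x : ℝ) :
    HasDerivAt (W' l g c₁ c₂) (l^2 * W l g c₁ c₂ x - g x) x := by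
  have hlin : HasDerivAt (fun x : ℝ => l*x) l x := by
    simpa using (hasDerivAt_id x).const_mul l
  have h := (((hlin.exp.const_mul (l*c₁)).sub (hlin.neg.exp.const_mul (l*c₂))).sub
    ((hlin.cosh.mul (hasDerivAt_WA (l := l) hg x)).sub
      (hlin.sinh.mul (hasDerivAt_WB (l := l) hg x))))
  refine h.congr_deriv ?_
  symm
  unfold W
  have hl' : l ≠ 0 := ne_of_gt hl
  have hid := Real.cosh_sq_sub_sinh_sq (l*x)
  field_simp
  linear_combination (g x) * hid

lemma deriv_W (hl : 0 < l) (hg : Continuous g) (c₁ c₂ : ℝ) :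
    deriv (W l g c₁ c₂) = W' l g c₁ c₂ :=
  funext fun x => (hasDerivAt_W hl hg c₁ c₂ x).deriv

lemma deriv_W' (hl : 0 < l) (hg : Continuous g) (c₁ c₂ x : ℝ) :
    deriv (W' l g c₁ c₂) x = l^2 * W l g c₁ c₂ x - g x :=
  (hasDerivAt_W' hl hg c₁ c₂ x).deriv

lemma continuous_W (hl : 0 < l) (hg : Continuous g) (c₁ c₂ : ℝ) :
    Continuous (W l g c₁ c₂) :=
  (Differentiable.continuous fun x => (hasDerivAt_W hl hg c₁ c₂ x).differentiableAt)

lemma contDiff_W (hl : 0 < l) (hg : Continuous g) (c₁ c₂ : ℝ) :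
    ContDiff ℝ 2 (W l g c₁ c₂) := by
  rw [show (2 : WithTop ℕ∞) = 1 + 1 from by norm_num, contDiff_succ_iff_deriv]
  refine ⟨fun x => (hasDerivAt_W hl hg c₁ c₂ x).differentiableAt, by simp, ?_⟩
  rw [deriv_W hl hg]
  rw [contDiff_one_iff_deriv]
  refine ⟨fun x => (hasDerivAt_W' hl hg c₁ c₂ x).differentiableAt, ?_⟩
  have : deriv (W' l g c₁ c₂) = fun x => l^2 * W l g c₁ c₂ x - g x :=
    funext fun x => deriv_W' hl hg c₁ c₂ x
  rw [this]
  exact (continuous_const.mul (continuous_W hl hg c₁ c₂)).sub hg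

lemma W_zero (c₁ c₂ : ℝ) : W l g c₁ c₂ 0 = c₁ + c₂ := by
  simp [W, WA, WB]

lemma W'_zero (c₁ c₂ : ℝ) : W' l g c₁ c₂ 0 = l*c₁ - l*c₂ := by
  simp [W', WA, WB]


theorem stmt12 (p q : ℝ) (hp : 0 ≤ p) (hq : 0 ≤ q) (hpq : 0 < p + q)
    (l : ℝ) (hl : 0 < l) (g : ℝ → ℝ) (hg : Continuous g)
    (gp gm : ℝ) (hgt : Tendsto g atTop (nhds gp)) (hgb : Tendsto g atBot (nhds gm))
    (Cm Cp Dm Dp : ℝ)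
    (hCm : Cm = (1 / (2 * l)) * ∫ y in Set.Iic (0:ℝ), Real.exp (l * y) * g y)
    (hCp : Cp = (1 / (2 * l)) * ∫ y in Set.Ici (0:ℝ), Real.exp (-(l * y)) * g y)
    (hDm : Dm = (2 * p / (p + q)) * Cp + ((q - p) / (p + q)) * Cm)
    (hDp : Dp = ((p - q) / (p + q)) * Cp + (2 * q / (p + q)) * Cm)
    (f : ℝ → ℝ)
    (hfp : ∀ x ≥ (0:ℝ), f x = Cp * Real.exp (l * x) + Dp * Real.exp (-(l * x))
        - (1 / l) * ∫ y in (0:ℝ)..x, Real.sinh (l * (x - y)) * g y)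
    (hfm : ∀ x ≤ (0:ℝ), f x = Cm * Real.exp (-(l * x)) + Dm * Real.exp (l * x)
        + (1 / l) * ∫ y in x..(0:ℝ), Real.sinh (l * (x - y)) * g y) :
    Continuous f ∧
    (∃ L : ℝ, Tendsto f atTop (nhds L)) ∧ (∃ L : ℝ, Tendsto f atBot (nhds L)) ∧
    ContDiffOn ℝ 2 f (Set.Ici 0) ∧ ContDiffOn ℝ 2 f (Set.Iic 0) ∧
    (∀ x : ℝ, x ≠ 0 → l^2 * f x - deriv (deriv f) x = g x) ∧
    p * derivWithin f (Set.Ici 0) 0 = q * derivWithin f (Set.Iic 0) 0 ∧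
    derivWithin (derivWithin f (Set.Ici 0)) (Set.Ici 0) 0
      = derivWithin (derivWithin f (Set.Iic 0)) (Set.Iic 0) 0 := by
  obtain ⟨M, hM0, hM⟩ := aux_bound hg hgt hgb
  have hl' : l ≠ 0 := ne_of_gt hl
  have hpq' : p + q ≠ 0 := ne_of_gt hpq
  -- f agrees with W on each side
  have hfpW : Set.EqOn f (W l g Cp Dp) (Set.Ici 0) := fun x hx => by
    rw [hfp x hx, W_eq hg]
  have hfmW : Set.EqOn f (W l g Dm Cm) (Set.Iic 0) := fun x hx => by
    rw [hfm x hx, W_eq hg, intervalIntegral.integral_symm]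
    ring
  -- continuity
  have hcont : Continuous f := by
    rw [continuous_iff_continuousAt]
    intro x
    rcases lt_trichotomy x 0 with h0 | h0 | h0
    · refine ((continuous_W hl hg Dm Cm).continuousAt).congr ?_
      exact (Filter.eventuallyEq_of_mem (Iio_mem_nhds h0) fun y hy => hfmW (Set.mem_Iic.mpr hy.le)).symm
    · subst h0
      rw [continuousAt_iff_continuous_left_right]
      constructor
      · exact ((continuous_W hl hg Dm Cm).continuousWithinAt).congr
          (fun y hy => hfmW hy) (hfmW Set.self_mem_Iic)
      · exact ((continuous_W hl hg Cp Dp).continuousWithinAt).congr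
          (fun y hy => hfpW hy) (hfpW Set.self_mem_Ici)
    · refine ((continuous_W hl hg Cp Dp).continuousAt).congr ?_
      exact (Filter.eventuallyEq_of_mem (Ioi_mem_nhds h0) fun y hy => hfpW (Set.mem_Ici.mpr hy.le)).symm
  refine ⟨hcont, ?_, ?_, ?_, ?_, ?_, ?_, ?_⟩
  · -- limit at +∞
    refine ⟨gp / l^2, (aux_plus hl hg hM hgt Cp Dp hCp).congr' ?_⟩
    filter_upwards [eventually_ge_atTop (0:ℝ)] with x hx
    exact (hfp x hx).symm
  · -- limit at -∞
    set g' : ℝ → ℝ := fun y => g (-y) with hg'def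
    have hg' : Continuous g' := hg.comp continuous_neg
    have hM' : ∀ y, |g' y| ≤ M := fun y => hM (-y)
    have hgt' : Tendsto g' atTop (nhds gm) := hgb.comp tendsto_neg_atTop_atBot
    have hCm' : Cm = (1 / (2 * l)) * ∫ y in Set.Ici (0:ℝ), Real.exp (-(l * y)) * g' y := by
      rw [hCm]
      congr 1
      rw [integral_Ici_eq_integral_Ioi]
      have hkey := integral_comp_neg_Ioi (0:ℝ) (fun z => Real.exp (l * z) * g z)
      simp only [neg_zero, mul_neg] at hkey
      rw [← hkey]
    have hLB := aux_plus hl hg' hM' hgt' Cm Dm hCm'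
    refine ⟨gm / l^2, (hLB.comp tendsto_neg_atBot_atTop).congr' ?_⟩
    filter_upwards [eventually_le_atBot (0:ℝ)] with x hx
    rw [hfm x hx]
    have h1 : (∫ u in (0:ℝ)..(-x), Real.sinh (l * (-x - u)) * g' u)
        = - ∫ y in x..(0:ℝ), Real.sinh (l * (x - y)) * g y := by
      have h2 : (∫ u in (0:ℝ)..(-x), Real.sinh (l * (-x - u)) * g' u)
          = ∫ u in (0:ℝ)..(-x), (fun z => Real.sinh (l * (-x + z)) * g z) (-u) := by
        refine intervalIntegral.integral_congr fun u _ => ?_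
        simp only [g']
        congr 2
      rw [h2, intervalIntegral.integral_comp_neg (fun z => Real.sinh (l * (-x + z)) * g z)]
      simp only [neg_neg, neg_zero]
      rw [← intervalIntegral.integral_neg]
      refine intervalIntegral.integral_congr fun y _ => ?_
      rw [show l * (-x + y) = -(l * (x - y)) from by ring, Real.sinh_neg]
      ring
    simp only [Function.comp_apply]
    rw [h1]
    rw [show l * (-x) = -(l*x) from by ring, neg_neg]
    ring
  · exact (contDiff_W hl hg Cp Dp).contDiffOn.congr hfpW
  · exact (contDiff_W hl hg Dm Cm).contDiffOn.congr hfmW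
  · -- ODE away from 0
    intro x hx
    rcases hx.lt_or_gt with h0 | h0
    · have hev : f =ᶠ[nhds x] W l g Dm Cm :=
        Filter.eventuallyEq_of_mem (Iio_mem_nhds h0) fun y hy => hfmW (Set.mem_Iic.mpr hy.le)
      rw [hev.deriv.deriv_eq, deriv_W hl hg, deriv_W' hl hg, hfmW h0.le]
      ring
    · have hev : f =ᶠ[nhds x] W l g Cp Dp :=
        Filter.eventuallyEq_of_mem (Ioi_mem_nhds h0) fun y hy => hfpW (Set.mem_Ici.mpr hy.le)
      rw [hev.deriv.deriv_eq, deriv_W hl hg, deriv_W' hl hg, hfpW h0.le]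
      ring
  · -- flux condition
    have hdp : derivWithin f (Set.Ici 0) 0 = l*Cp - l*Dp := by
      rw [derivWithin_congr hfpW (hfpW Set.self_mem_Ici),
        (hasDerivAt_W hl hg Cp Dp 0).hasDerivWithinAt.derivWithin
          (uniqueDiffOn_Ici 0 0 Set.self_mem_Ici), W'_zero]
    have hdm : derivWithin f (Set.Iic 0) 0 = l*Dm - l*Cm := by
      rw [derivWithin_congr hfmW (hfmW Set.self_mem_Iic),
        (hasDerivAt_W hl hg Dm Cm 0).hasDerivWithinAt.derivWithin
          (uniqueDiffOn_Iic 0 0 Set.self_mem_Iic), W'_zero]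
    rw [hdp, hdm, hDp, hDm]
    field_simp
    ring
  · -- second derivative matching
    have hEqP : Set.EqOn (derivWithin f (Set.Ici 0)) (W' l g Cp Dp) (Set.Ici 0) := by
      intro x hx
      rcases eq_or_lt_of_le (Set.mem_Ici.mp hx) with h0 | h0
      · rw [← h0]
        rw [derivWithin_congr hfpW (hfpW Set.self_mem_Ici)]
        exact (hasDerivAt_W hl hg Cp Dp 0).hasDerivWithinAt.derivWithin
          (uniqueDiffOn_Ici 0 0 Set.self_mem_Ici)
      · have hmem : Set.Ici (0:ℝ) ∈ nhds x :=
          Filter.mem_of_superset (Ioi_mem_nhds h0) Set.Ioi_subset_Ici_self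
        rw [derivWithin_of_mem_nhds hmem]
        have hev : f =ᶠ[nhds x] W l g Cp Dp :=
          Filter.eventuallyEq_of_mem (Ioi_mem_nhds h0) fun y hy => hfpW (Set.mem_Ici.mpr hy.le)
        rw [hev.deriv_eq, deriv_W hl hg]
    have hEqM : Set.EqOn (derivWithin f (Set.Iic 0)) (W' l g Dm Cm) (Set.Iic 0) := by
      intro x hx
      rcases eq_or_lt_of_le (Set.mem_Iic.mp hx) with h0 | h0
      · rw [h0]
        rw [derivWithin_congr hfmW (hfmW Set.self_mem_Iic)]
        exact (hasDerivAt_W hl hg Dm Cm 0).hasDerivWithinAt.derivWithin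
          (uniqueDiffOn_Iic 0 0 Set.self_mem_Iic)
      · have hmem : Set.Iic (0:ℝ) ∈ nhds x :=
          Filter.mem_of_superset (Iio_mem_nhds h0) Set.Iio_subset_Iic_self
        rw [derivWithin_of_mem_nhds hmem]
        have hev : f =ᶠ[nhds x] W l g Dm Cm :=
          Filter.eventuallyEq_of_mem (Iio_mem_nhds h0) fun y hy => hfmW (Set.mem_Iic.mpr hy.le)
        rw [hev.deriv_eq, deriv_W hl hg]
    have h2p : derivWithin (derivWithin f (Set.Ici 0)) (Set.Ici 0) 0
        = l^2 * (Cp + Dp) - g 0 := by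
      rw [derivWithin_congr hEqP (hEqP Set.self_mem_Ici),
        (hasDerivAt_W' hl hg Cp Dp 0).hasDerivWithinAt.derivWithin
          (uniqueDiffOn_Ici 0 0 Set.self_mem_Ici), W_zero]
    have h2m : derivWithin (derivWithin f (Set.Iic 0)) (Set.Iic 0) 0
        = l^2 * (Dm + Cm) - g 0 := by
      rw [derivWithin_congr hEqM (hEqM Set.self_mem_Iic),
        (hasDerivAt_W' hl hg Dm Cm 0).hasDerivWithinAt.derivWithin
          (uniqueDiffOn_Iic 0 0 Set.self_mem_Iic), W_zero]
    rw [h2p, h2m, hDp, hDm]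
    field_simp
    ring
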